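/- The subspace W = V₀⁺ + V₀⁻ + V₂⁺ + V₂⁻ of P₂ contains V_τ = span{x₀², x₃², x₂x₄, x₅x₁}, is invariant under S and T, and is contained in every subspace of P₂ that contains V_τ and is invariant under S and T; i.e., W is the smallest S- and T-invariant subspace of P₂ containing the T-fixed space V_τ. -/
import Mathlib


open MvPolynomial

noncomputable section

abbrev R6 : Type := MvPolynomial (Fin 6) ℂ

/-- `ε = exp(2πi/6)`, a primitive 6th root of unity. -/
def ε : ℂ := Complex.exp (2 * Real.pi * Complex.I / 6)

/-- The Heisenberg generator `S`, the `ℂ`-algebra map with `S xᵢ = x_{i+1 mod 6}`. -/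
def Sh : R6 →ₐ[ℂ] R6 := aeval fun i : Fin 6 => X (i + 1)

/-- The Heisenberg generator `T`, the `ℂ`-algebra map with `T xᵢ = εⁱ xᵢ`. -/
def Tw : R6 →ₐ[ℂ] R6 := aeval fun i : Fin 6 => C (ε ^ (i : ℕ)) * X i

/-- The space of homogeneous polynomials of degree 2. -/
def P2 : Submodule ℂ R6 := homogeneousSubmodule (Fin 6) ℂ 2

def V0p : Submodule ℂ R6 :=
  Submodule.span ℂ {X 0 ^ 2 + X 3 ^ 2, X 1 ^ 2 + X 4 ^ 2, X 2 ^ 2 + X 5 ^ 2}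
def V0m : Submodule ℂ R6 :=
  Submodule.span ℂ {X 0 ^ 2 - X 3 ^ 2, X 1 ^ 2 - X 4 ^ 2, X 2 ^ 2 - X 5 ^ 2}
def V2p : Submodule ℂ R6 :=
  Submodule.span ℂ {X 0 * X 2 + X 3 * X 5, X 1 * X 3 + X 4 * X 0, X 2 * X 4 + X 5 * X 1}
def V2m : Submodule ℂ R6 :=
  Submodule.span ℂ {X 0 * X 2 - X 3 * X 5, X 1 * X 3 - X 4 * X 0, X 2 * X 4 - X 5 * X 1}

/-- The `T`-fixed space `V_τ = span {x₀², x₃², x₂x₄, x₅x₁}`. -/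
def Vtau : Submodule ℂ R6 := Submodule.span ℂ {X 0 ^ 2, X 3 ^ 2, X 2 * X 4, X 5 * X 1}

-- Auxiliary lemmas ---------------------------------------------------------

lemma e6 : ε ^ 6 = 1 := by
  rw [ε, ← Complex.exp_nat_mul]
  norm_num
  rw [show (6:ℂ) * (2 * Real.pi * Complex.I / 6) = 2 * Real.pi * Complex.I by ring,
    Complex.exp_two_pi_mul_I]

lemma e8 : ε ^ 8 = ε ^ 2 := by rw [show (8:ℕ) = 6 + 2 from rfl, pow_add, e6, one_mul]

lemma e10 : ε ^ 10 = ε ^ 4 := by rw [show (10:ℕ) = 6 + 4 from rfl, pow_add, e6, one_mul]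

lemma hC6 : (C ε : R6) ^ 6 = 1 := by rw [← C_pow, e6, C_1]
lemma hC8 : (C ε : R6) ^ 8 = C ε ^ 2 := by rw [← C_pow, ← C_pow, e8]

lemma fv0 : ((0:Fin 6):ℕ) = 0 := rfl
lemma fv1 : ((1:Fin 6):ℕ) = 1 := rfl
lemma fv2 : ((2:Fin 6):ℕ) = 2 := rfl
lemma fv3 : ((3:Fin 6):ℕ) = 3 := rfl
lemma fv4 : ((4:Fin 6):ℕ) = 4 := rfl
lemma fv5 : ((5:Fin 6):ℕ) = 5 := rfl

abbrev Wsp : Submodule ℂ R6 := V0p ⊔ V0m ⊔ V2p ⊔ V2m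

lemma le_W_0p : V0p ≤ Wsp := le_sup_left.trans (le_sup_left.trans le_sup_left)
lemma le_W_0m : V0m ≤ Wsp := le_sup_right.trans (le_sup_left.trans le_sup_left)
lemma le_W_2p : V2p ≤ Wsp := le_sup_right.trans le_sup_left
lemma le_W_2m : V2m ≤ Wsp := le_sup_right

lemma map_span_le_W (f : R6 →ₗ[ℂ] R6) (s : Set R6) (h : ∀ x ∈ s, f x ∈ Wsp) :
    Submodule.map f (Submodule.span ℂ s) ≤ Wsp := by
  rw [Submodule.map_span]
  exact Submodule.span_le.mpr (by rintro y ⟨x, hx, rfl⟩; exact h x hx)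

lemma twA0 : Tw (X 0 ^ 2 + X 3 ^ 2) = X 0 ^ 2 + X 3 ^ 2 := by
  simp only [Tw, map_add, map_sub, map_mul, map_pow, aeval_X, fv0, fv1, fv2, fv3, fv4, fv5]
  simp only [mul_pow, ← C_pow, ← C_mul, ← pow_mul, ← pow_add, smul_eq_C_mul]
  norm_num [e6, e8, e10, mul_add, mul_sub]

lemma twA1 : Tw (X 1 ^ 2 + X 4 ^ 2) = (ε ^ 2 : ℂ) • (X 1 ^ 2 + X 4 ^ 2) := by
  simp only [Tw, map_add, map_sub, map_mul, map_pow, aeval_X, fv0, fv1, fv2, fv3, fv4, fv5]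
  simp only [mul_pow, ← C_pow, ← C_mul, ← pow_mul, ← pow_add, smul_eq_C_mul]
  norm_num [e6, e8, e10, mul_add, mul_sub]

lemma twA2 : Tw (X 2 ^ 2 + X 5 ^ 2) = (ε ^ 4 : ℂ) • (X 2 ^ 2 + X 5 ^ 2) := by
  simp only [Tw, map_add, map_sub, map_mul, map_pow, aeval_X, fv0, fv1, fv2, fv3, fv4, fv5]
  simp only [mul_pow, ← C_pow, ← C_mul, ← pow_mul, ← pow_add, smul_eq_C_mul]
  norm_num [e6, e8, e10, mul_add, mul_sub]

lemma twB0 : Tw (X 0 ^ 2 - X 3 ^ 2) = X 0 ^ 2 - X 3 ^ 2 := by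
  simp only [Tw, map_add, map_sub, map_mul, map_pow, aeval_X, fv0, fv1, fv2, fv3, fv4, fv5]
  simp only [mul_pow, ← C_pow, ← C_mul, ← pow_mul, ← pow_add, smul_eq_C_mul]
  norm_num [e6, e8, e10, mul_add, mul_sub]

lemma twB1 : Tw (X 1 ^ 2 - X 4 ^ 2) = (ε ^ 2 : ℂ) • (X 1 ^ 2 - X 4 ^ 2) := by
  simp only [Tw, map_add, map_sub, map_mul, map_pow, aeval_X, fv0, fv1, fv2, fv3, fv4, fv5]
  simp only [mul_pow, ← C_pow, ← C_mul, ← pow_mul, ← pow_add, smul_eq_C_mul]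
  norm_num [e6, e8, e10, mul_add, mul_sub]

lemma twB2 : Tw (X 2 ^ 2 - X 5 ^ 2) = (ε ^ 4 : ℂ) • (X 2 ^ 2 - X 5 ^ 2) := by
  simp only [Tw, map_add, map_sub, map_mul, map_pow, aeval_X, fv0, fv1, fv2, fv3, fv4, fv5]
  simp only [mul_pow, ← C_pow, ← C_mul, ← pow_mul, ← pow_add, smul_eq_C_mul]
  norm_num [e6, e8, e10, mul_add, mul_sub]

lemma twC1 : Tw (X 0 * X 2 + X 3 * X 5) = (ε ^ 2 : ℂ) • (X 0 * X 2 + X 3 * X 5) := by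
  simp only [Tw, map_add, map_sub, map_mul, map_pow, aeval_X, fv0, fv1, fv2, fv3, fv4, fv5]
  simp only [mul_pow, ← C_pow, ← C_mul, ← pow_mul, ← pow_add, smul_eq_C_mul]
  norm_num [e6, e8, e10, mul_add, mul_sub]
  linear_combination (X 3 * X 5 : R6) * hC8

lemma twC2 : Tw (X 1 * X 3 + X 4 * X 0) = (ε ^ 4 : ℂ) • (X 1 * X 3 + X 4 * X 0) := by
  simp only [Tw, map_add, map_sub, map_mul, map_pow, aeval_X, fv0, fv1, fv2, fv3, fv4, fv5]
  simp only [mul_pow, ← C_pow, ← C_mul, ← pow_mul, ← pow_add, smul_eq_C_mul]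
  norm_num [e6, e8, e10, mul_add, mul_sub]
  ring

lemma twC3 : Tw (X 2 * X 4 + X 5 * X 1) = X 2 * X 4 + X 5 * X 1 := by
  simp only [Tw, map_add, map_sub, map_mul, map_pow, aeval_X, fv0, fv1, fv2, fv3, fv4, fv5]
  simp only [mul_pow, ← C_pow, ← C_mul, ← pow_mul, ← pow_add, smul_eq_C_mul]
  norm_num [e6, e8, e10, mul_add, mul_sub]
  linear_combination (X 2 * X 4 + X 5 * X 1 : R6) * hC6

lemma twD1 : Tw (X 0 * X 2 - X 3 * X 5) = (ε ^ 2 : ℂ) • (X 0 * X 2 - X 3 * X 5) := by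
  simp only [Tw, map_add, map_sub, map_mul, map_pow, aeval_X, fv0, fv1, fv2, fv3, fv4, fv5]
  simp only [mul_pow, ← C_pow, ← C_mul, ← pow_mul, ← pow_add, smul_eq_C_mul]
  norm_num [e6, e8, e10, mul_add, mul_sub]
  linear_combination (-(X 3 * X 5) : R6) * hC8

lemma twD2 : Tw (X 1 * X 3 - X 4 * X 0) = (ε ^ 4 : ℂ) • (X 1 * X 3 - X 4 * X 0) := by
  simp only [Tw, map_add, map_sub, map_mul, map_pow, aeval_X, fv0, fv1, fv2, fv3, fv4, fv5]
  simp only [mul_pow, ← C_pow, ← C_mul, ← pow_mul, ← pow_add, smul_eq_C_mul]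
  norm_num [e6, e8, e10, mul_add, mul_sub]
  ring

lemma twD3 : Tw (X 2 * X 4 - X 5 * X 1) = X 2 * X 4 - X 5 * X 1 := by
  simp only [Tw, map_add, map_sub, map_mul, map_pow, aeval_X, fv0, fv1, fv2, fv3, fv4, fv5]
  simp only [mul_pow, ← C_pow, ← C_mul, ← pow_mul, ← pow_add, smul_eq_C_mul]
  norm_num [e6, e8, e10, mul_add, mul_sub]
  linear_combination (X 2 * X 4 - X 5 * X 1 : R6) * hC6

set_option maxHeartbeats 1600000 in
/-- `W = V₀⁺ + V₀⁻ + V₂⁺ + V₂⁻` is the smallest `S`- and `T`-invariant subspace of `P₂`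
containing `V_τ`. -/
theorem smallest_invariant_subspace_containing_Vtau :
    Vtau ≤ V0p ⊔ V0m ⊔ V2p ⊔ V2m ∧
    (V0p ⊔ V0m ⊔ V2p ⊔ V2m : Submodule ℂ R6) ≤ P2 ∧
    Submodule.map Sh.toLinearMap (V0p ⊔ V0m ⊔ V2p ⊔ V2m) ≤ V0p ⊔ V0m ⊔ V2p ⊔ V2m ∧
    Submodule.map Tw.toLinearMap (V0p ⊔ V0m ⊔ V2p ⊔ V2m) ≤ V0p ⊔ V0m ⊔ V2p ⊔ V2m ∧
    ∀ U : Submodule ℂ R6, U ≤ P2 → Vtau ≤ U →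
      Submodule.map Sh.toLinearMap U ≤ U → Submodule.map Tw.toLinearMap U ≤ U →
      V0p ⊔ V0m ⊔ V2p ⊔ V2m ≤ U := by
  have gA0 : (X 0 ^ 2 + X 3 ^ 2 : R6) ∈ Wsp := le_W_0p (Submodule.subset_span (by simp))
  have gB0 : (X 0 ^ 2 - X 3 ^ 2 : R6) ∈ Wsp := le_W_0m (Submodule.subset_span (by simp))
  have gC3 : (X 2 * X 4 + X 5 * X 1 : R6) ∈ Wsp := le_W_2p (Submodule.subset_span (by simp))
  have gD3 : (X 2 * X 4 - X 5 * X 1 : R6) ∈ Wsp := le_W_2m (Submodule.subset_span (by simp))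
  refine ⟨?_, ?_, ?_, ?_, ?_⟩
  · -- Vtau ≤ W
    refine Submodule.span_le.mpr ?_
    simp only [Set.insert_subset_iff, Set.singleton_subset_iff, SetLike.mem_coe]
    refine ⟨?_, ?_, ?_, ?_⟩
    · have h : (X 0 ^ 2 : R6) =
          (2⁻¹:ℂ) • (X 0 ^ 2 + X 3 ^ 2) + (2⁻¹:ℂ) • (X 0 ^ 2 - X 3 ^ 2) := by module
      rw [h]; exact add_mem (Submodule.smul_mem _ _ gA0) (Submodule.smul_mem _ _ gB0)
    · have h : (X 3 ^ 2 : R6) =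
          (2⁻¹:ℂ) • (X 0 ^ 2 + X 3 ^ 2) - (2⁻¹:ℂ) • (X 0 ^ 2 - X 3 ^ 2) := by module
      rw [h]; exact sub_mem (Submodule.smul_mem _ _ gA0) (Submodule.smul_mem _ _ gB0)
    · have h : (X 2 * X 4 : R6) =
          (2⁻¹:ℂ) • (X 2 * X 4 + X 5 * X 1) + (2⁻¹:ℂ) • (X 2 * X 4 - X 5 * X 1) := by module
      rw [h]; exact add_mem (Submodule.smul_mem _ _ gC3) (Submodule.smul_mem _ _ gD3)
    · have h : (X 5 * X 1 : R6) =
          (2⁻¹:ℂ) • (X 2 * X 4 + X 5 * X 1) - (2⁻¹:ℂ) • (X 2 * X 4 - X 5 * X 1) := by module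
      rw [h]; exact sub_mem (Submodule.smul_mem _ _ gC3) (Submodule.smul_mem _ _ gD3)
  · -- W ≤ P2
    have hsq : ∀ i : Fin 6, (X i ^ 2 : R6).IsHomogeneous 2 := fun i => by
      simpa using (isHomogeneous_X ℂ i).pow 2
    have hmul : ∀ i j : Fin 6, (X i * X j : R6).IsHomogeneous 2 := fun i j => by
      simpa using (isHomogeneous_X ℂ i).mul (isHomogeneous_X ℂ j)
    refine sup_le (sup_le (sup_le ?_ ?_) ?_) ?_
    · simp only [V0p]
      refine Submodule.span_le.mpr ?_
      simp only [Set.insert_subset_iff, Set.singleton_subset_iff, SetLike.mem_coe, P2,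
        mem_homogeneousSubmodule]
      exact ⟨(hsq 0).add (hsq 3), (hsq 1).add (hsq 4), (hsq 2).add (hsq 5)⟩
    · simp only [V0m]
      refine Submodule.span_le.mpr ?_
      simp only [Set.insert_subset_iff, Set.singleton_subset_iff, SetLike.mem_coe, P2,
        mem_homogeneousSubmodule]
      exact ⟨(hsq 0).sub (hsq 3), (hsq 1).sub (hsq 4), (hsq 2).sub (hsq 5)⟩
    · simp only [V2p]
      refine Submodule.span_le.mpr ?_
      simp only [Set.insert_subset_iff, Set.singleton_subset_iff, SetLike.mem_coe, P2,
        mem_homogeneousSubmodule]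
      exact ⟨(hmul 0 2).add (hmul 3 5), (hmul 1 3).add (hmul 4 0), (hmul 2 4).add (hmul 5 1)⟩
    · simp only [V2m]
      refine Submodule.span_le.mpr ?_
      simp only [Set.insert_subset_iff, Set.singleton_subset_iff, SetLike.mem_coe, P2,
        mem_homogeneousSubmodule]
      exact ⟨(hmul 0 2).sub (hmul 3 5), (hmul 1 3).sub (hmul 4 0), (hmul 2 4).sub (hmul 5 1)⟩
  · -- S-invariance
    simp only [Submodule.map_sup]
    refine sup_le (sup_le (sup_le ?_ ?_) ?_) ?_
    · simp only [V0p]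
      refine map_span_le_W _ _ ?_
      intro x hx
      simp only [Set.mem_insert_iff, Set.mem_singleton_iff] at hx
      simp only [AlgHom.toLinearMap_apply]
      rcases hx with rfl | rfl | rfl
      · have e : Sh (X 0 ^ 2 + X 3 ^ 2) = X 1 ^ 2 + X 4 ^ 2 := by simp [Sh]
        rw [e]; exact le_W_0p (Submodule.subset_span (by simp))
      · have e : Sh (X 1 ^ 2 + X 4 ^ 2) = X 2 ^ 2 + X 5 ^ 2 := by simp [Sh]
        rw [e]; exact le_W_0p (Submodule.subset_span (by simp))
      · have e : Sh (X 2 ^ 2 + X 5 ^ 2) = X 0 ^ 2 + X 3 ^ 2 := by simp [Sh]; try ring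
        rw [e]; exact gA0
    · simp only [V0m]
      refine map_span_le_W _ _ ?_
      intro x hx
      simp only [Set.mem_insert_iff, Set.mem_singleton_iff] at hx
      simp only [AlgHom.toLinearMap_apply]
      rcases hx with rfl | rfl | rfl
      · have e : Sh (X 0 ^ 2 - X 3 ^ 2) = X 1 ^ 2 - X 4 ^ 2 := by simp [Sh]
        rw [e]; exact le_W_0m (Submodule.subset_span (by simp))
      · have e : Sh (X 1 ^ 2 - X 4 ^ 2) = X 2 ^ 2 - X 5 ^ 2 := by simp [Sh]
        rw [e]; exact le_W_0m (Submodule.subset_span (by simp))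
      · have e : Sh (X 2 ^ 2 - X 5 ^ 2) = -(X 0 ^ 2 - X 3 ^ 2) := by simp [Sh]; try ring
        rw [e]; exact neg_mem gB0
    · simp only [V2p]
      refine map_span_le_W _ _ ?_
      intro x hx
      simp only [Set.mem_insert_iff, Set.mem_singleton_iff] at hx
      simp only [AlgHom.toLinearMap_apply]
      rcases hx with rfl | rfl | rfl
      · have e : Sh (X 0 * X 2 + X 3 * X 5) = X 1 * X 3 + X 4 * X 0 := by simp [Sh]; try ring
        rw [e]; exact le_W_2p (Submodule.subset_span (by simp))
      · have e : Sh (X 1 * X 3 + X 4 * X 0) = X 2 * X 4 + X 5 * X 1 := by simp [Sh]; try ring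
        rw [e]; exact gC3
      · have e : Sh (X 2 * X 4 + X 5 * X 1) = X 0 * X 2 + X 3 * X 5 := by simp [Sh]; try ring
        rw [e]; exact le_W_2p (Submodule.subset_span (by simp))
    · simp only [V2m]
      refine map_span_le_W _ _ ?_
      intro x hx
      simp only [Set.mem_insert_iff, Set.mem_singleton_iff] at hx
      simp only [AlgHom.toLinearMap_apply]
      rcases hx with rfl | rfl | rfl
      · have e : Sh (X 0 * X 2 - X 3 * X 5) = X 1 * X 3 - X 4 * X 0 := by simp [Sh]; try ring
        rw [e]; exact le_W_2m (Submodule.subset_span (by simp))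
      · have e : Sh (X 1 * X 3 - X 4 * X 0) = X 2 * X 4 - X 5 * X 1 := by simp [Sh]; try ring
        rw [e]; exact gD3
      · have e : Sh (X 2 * X 4 - X 5 * X 1) = -(X 0 * X 2 - X 3 * X 5) := by simp [Sh]; try ring
        rw [e]; exact neg_mem (le_W_2m (Submodule.subset_span (by simp)))
  · -- T-invariance
    simp only [Submodule.map_sup]
    refine sup_le (sup_le (sup_le ?_ ?_) ?_) ?_
    · simp only [V0p]
      refine map_span_le_W _ _ ?_
      intro x hx
      simp only [Set.mem_insert_iff, Set.mem_singleton_iff] at hx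
      simp only [AlgHom.toLinearMap_apply]
      rcases hx with rfl | rfl | rfl
      · rw [twA0]; exact gA0
      · rw [twA1]; exact Submodule.smul_mem _ _ (le_W_0p (Submodule.subset_span (by simp)))
      · rw [twA2]; exact Submodule.smul_mem _ _ (le_W_0p (Submodule.subset_span (by simp)))
    · simp only [V0m]
      refine map_span_le_W _ _ ?_
      intro x hx
      simp only [Set.mem_insert_iff, Set.mem_singleton_iff] at hx
      simp only [AlgHom.toLinearMap_apply]
      rcases hx with rfl | rfl | rfl
      · rw [twB0]; exact gB0
      · rw [twB1]; exact Submodule.smul_mem _ _ (le_W_0m (Submodule.subset_span (by simp)))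
      · rw [twB2]; exact Submodule.smul_mem _ _ (le_W_0m (Submodule.subset_span (by simp)))
    · simp only [V2p]
      refine map_span_le_W _ _ ?_
      intro x hx
      simp only [Set.mem_insert_iff, Set.mem_singleton_iff] at hx
      simp only [AlgHom.toLinearMap_apply]
      rcases hx with rfl | rfl | rfl
      · rw [twC1]; exact Submodule.smul_mem _ _ (le_W_2p (Submodule.subset_span (by simp)))
      · rw [twC2]; exact Submodule.smul_mem _ _ (le_W_2p (Submodule.subset_span (by simp)))
      · rw [twC3]; exact gC3
    · simp only [V2m]
      refine map_span_le_W _ _ ?_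
      intro x hx
      simp only [Set.mem_insert_iff, Set.mem_singleton_iff] at hx
      simp only [AlgHom.toLinearMap_apply]
      rcases hx with rfl | rfl | rfl
      · rw [twD1]; exact Submodule.smul_mem _ _ (le_W_2m (Submodule.subset_span (by simp)))
      · rw [twD2]; exact Submodule.smul_mem _ _ (le_W_2m (Submodule.subset_span (by simp)))
      · rw [twD3]; exact gD3
  · -- minimality
    intro U _ hV hS _
    have hU : ∀ p ∈ U, Sh p ∈ U := fun p hp => hS ⟨p, hp, rfl⟩
    have hVt : ∀ x ∈ ({X 0 ^ 2, X 3 ^ 2, X 2 * X 4, X 5 * X 1} : Set R6), x ∈ U :=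
      fun x hx => hV (Submodule.subset_span hx)
    have u0 : (X 0 ^ 2 : R6) ∈ U := hVt _ (Set.mem_insert _ _)
    have u3 : (X 3 ^ 2 : R6) ∈ U := hVt _ (Set.mem_insert_of_mem _ (Set.mem_insert _ _))
    have u24 : (X 2 * X 4 : R6) ∈ U :=
      hVt _ (Set.mem_insert_of_mem _ (Set.mem_insert_of_mem _ (Set.mem_insert _ _)))
    have u51 : (X 5 * X 1 : R6) ∈ U :=
      hVt _ (Set.mem_insert_of_mem _ (Set.mem_insert_of_mem _ (Set.mem_insert_of_mem _ rfl)))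
    have u1 : (X 1 ^ 2 : R6) ∈ U := by have := hU _ u0; simpa [Sh] using this
    have u2 : (X 2 ^ 2 : R6) ∈ U := by have := hU _ u1; simpa [Sh] using this
    have u4 : (X 4 ^ 2 : R6) ∈ U := by have := hU _ u3; simpa [Sh] using this
    have u5 : (X 5 ^ 2 : R6) ∈ U := by have := hU _ u4; simpa [Sh] using this
    have u35 : (X 3 * X 5 : R6) ∈ U := by have := hU _ u24; simpa [Sh] using this
    have u40 : (X 4 * X 0 : R6) ∈ U := by have := hU _ u35; simpa [Sh] using this
    have u02 : (X 0 * X 2 : R6) ∈ U := by have := hU _ u51; simpa [Sh] using this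
    have u13 : (X 1 * X 3 : R6) ∈ U := by have := hU _ u02; simpa [Sh] using this
    refine sup_le (sup_le (sup_le ?_ ?_) ?_) ?_
    · simp only [V0p]
      refine Submodule.span_le.mpr ?_
      simp only [Set.insert_subset_iff, Set.singleton_subset_iff, SetLike.mem_coe]
      exact ⟨add_mem u0 u3, add_mem u1 u4, add_mem u2 u5⟩
    · simp only [V0m]
      refine Submodule.span_le.mpr ?_
      simp only [Set.insert_subset_iff, Set.singleton_subset_iff, SetLike.mem_coe]
      exact ⟨sub_mem u0 u3, sub_mem u1 u4, sub_mem u2 u5⟩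
    · simp only [V2p]
      refine Submodule.span_le.mpr ?_
      simp only [Set.insert_subset_iff, Set.singleton_subset_iff, SetLike.mem_coe]
      exact ⟨add_mem u02 u35, add_mem u13 u40, add_mem u24 u51⟩
    · simp only [V2m]
      refine Submodule.span_le.mpr ?_
      simp only [Set.insert_subset_iff, Set.singleton_subset_iff, SetLike.mem_coe]
      exact ⟨sub_mem u02 u35, sub_mem u13 u40, sub_mem u24 u51⟩
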